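/- The function g(t) := leb(A_t ∩ A) is differentiable at every t > 0 with derivative g′(t) = −(d(−t) − b). -/

import Mathlib

open MeasureTheory Set Filter

/-- The overlap-area function `g(t) = leb(A_t ∩ A)` is differentiable at
every `t > 0` with derivative `g'(t) = −(d(−t) − b)`. -/
theorem trawl_overlap_area_hasDerivAt
    (b : ℝ) (hb : b ∈ Set.Icc (0:ℝ) 1)
    (d : ℝ → ℝ)
    (hd_cont : ContinuousOn d (Set.Iic 0))
    (hd_mono : MonotoneOn d (Set.Iic 0))
    (hd_range : ∀ s ≤ (0:ℝ), d s ∈ Set.Icc b 1)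
    (hd0 : d 0 = 1)
    (hd_lim : Filter.Tendsto d Filter.atBot (nhds b))
    (hd_int : MeasureTheory.IntegrableOn (fun s => d s - b) (Set.Iic 0))
    (A : ℝ → Set (ℝ × ℝ))
    (hA : ∀ t, A t = {p : ℝ × ℝ | p.2 ≤ t ∧ b ≤ p.1 ∧ p.1 < d (p.2 - t)}) :
    ∀ t > (0:ℝ),
      HasDerivAt (fun t => (volume (A t ∩ A 0)).toReal) (-(d (-t) - b)) t := by
  set f : ℝ → ℝ := fun u => d u - b with hf
  set F : ℝ → ℝ := fun x => ∫ u in Iic x, f u with hF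
  -- f is ae strongly measurable on Iic 0
  have hf_meas : AEStronglyMeasurable f (volume.restrict (Iic (0:ℝ))) :=
    hd_int.aestronglyMeasurable
  -- Step 1: the area formula
  have key : ∀ t > (0:ℝ), (volume (A t ∩ A 0)).toReal = F (-t) := by
    intro t ht
    -- the auxiliary continuous extension
    set e : ℝ → ℝ := fun s => d (min s 0 - t) with he
    have he_cont : Continuous e := by
      rw [← continuousOn_univ]
      apply hd_cont.comp (Continuous.continuousOn (by continuity))
      intro s _
      simp only [mem_Iic]
      have : min s 0 ≤ 0 := min_le_right _ _
      linarith
    have hset : A t ∩ A 0 = {p : ℝ × ℝ | p.2 ≤ 0 ∧ b ≤ p.1 ∧ p.1 < e p.2} := by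
      rw [hA t, hA 0]
      ext p
      simp only [mem_inter_iff, mem_setOf_eq, sub_zero, he]
      constructor
      · rintro ⟨⟨_, hb1, hlt⟩, h0, _, _⟩
        refine ⟨h0, hb1, ?_⟩
        rwa [min_eq_left h0]
      · rintro ⟨h0, hb1, hlt⟩
        rw [min_eq_left h0] at hlt
        refine ⟨⟨by linarith, hb1, hlt⟩, h0, hb1, ?_⟩
        calc p.1 < d (p.2 - t) := hlt
          _ ≤ d p.2 := hd_mono (by simp only [mem_Iic]; linarith) (by simpa using h0)
              (by linarith)
    have hSmeas : MeasurableSet {p : ℝ × ℝ | p.2 ≤ 0 ∧ b ≤ p.1 ∧ p.1 < e p.2} := by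
      refine MeasurableSet.inter ?_ (MeasurableSet.inter ?_ ?_)
      · exact measurableSet_le (measurable_snd) measurable_const
      · exact measurableSet_le measurable_const measurable_fst
      · exact measurableSet_lt measurable_fst (he_cont.measurable.comp measurable_snd)
    -- compute the volume via Fubini over second coordinate
    have hvol : volume {p : ℝ × ℝ | p.2 ≤ 0 ∧ b ≤ p.1 ∧ p.1 < e p.2}
        = ∫⁻ s in Iic (0:ℝ), ENNReal.ofReal (e s - b) := by
      rw [Measure.volume_eq_prod, Measure.prod_apply_symm hSmeas]
      have : ∀ s : ℝ, ((fun x => (x, s)) ⁻¹' {p : ℝ × ℝ | p.2 ≤ 0 ∧ b ≤ p.1 ∧ p.1 < e p.2})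
          = if s ≤ 0 then Ico b (e s) else ∅ := by
        intro s
        ext x
        by_cases hs : s ≤ 0 <;> simp [hs, Ico, and_comm]
      simp_rw [this]
      rw [← lintegral_indicator measurableSet_Iic]
      congr 1
      ext s
      by_cases hs : s ≤ 0 <;> simp [hs, indicator, Real.volume_Ico]
    -- pointwise equality of e with d (· - t) on Iic 0
    have he_eq : ∀ s ∈ Iic (0:ℝ), e s - b = f (s - t) := by
      intro s hs
      simp only [he, hf, min_eq_left (mem_Iic.mp hs)]
    -- the translated indicator function
    set g : ℝ → ℝ := (Iic (-t)).indicator f with hg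
    have hg_int : Integrable g := by
      rw [hg, integrable_indicator_iff measurableSet_Iic]
      exact hd_int.mono_set (Iic_subset_Iic.mpr (by linarith))
    have hgt_int : Integrable (fun s => g (s - t)) := hg_int.comp_sub_right t
    have hg_eq : ∀ s ∈ Iic (0:ℝ), g (s - t) = f (s - t) := by
      intro s hs
      rw [hg, indicator_of_mem]
      simp only [mem_Iic] at hs ⊢
      linarith
    have hg_zero : ∀ s ∉ Iic (0:ℝ), g (s - t) = 0 := by
      intro s hs
      rw [hg, indicator_of_notMem]
      simp only [mem_Iic] at hs ⊢
      push_neg at hs ⊢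
      linarith
    -- the integral identity
    have hint_eq : ∫ s in Iic (0:ℝ), (e s - b) = F (-t) := by
      have h1 : ∫ s in Iic (0:ℝ), (e s - b) = ∫ s in Iic (0:ℝ), g (s - t) := by
        refine setIntegral_congr_fun measurableSet_Iic fun s hs => ?_
        rw [he_eq s hs, hg_eq s hs]
      rw [h1, setIntegral_eq_integral_of_forall_compl_eq_zero hg_zero,
        integral_sub_right_eq_self g t, hg, integral_indicator measurableSet_Iic]
    -- integrability of e - b on Iic 0
    have he_int : IntegrableOn (fun s => e s - b) (Iic (0:ℝ)) := by
      refine (hgt_int.integrableOn).congr_fun (fun s hs => ?_) measurableSet_Iic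
      show g (s - t) = e s - b
      rw [hg_eq s hs, ← he_eq s hs]
    -- nonnegativity
    have he_nn : ∀ s, 0 ≤ e s - b := by
      intro s
      have := (hd_range (min s 0 - t) (by have : min s 0 ≤ 0 := min_le_right _ _; linarith)).1
      simp only [he]; linarith
    rw [hset, hvol, ← ofReal_integral_eq_lintegral_ofReal he_int
      (Filter.Eventually.of_forall fun s => he_nn s), ENNReal.toReal_ofReal
      (integral_nonneg fun s => he_nn s), hint_eq]
  -- Step 2: F has derivative f(-t₀) at -t₀ for t₀ > 0
  intro t ht
  have hx : -t < 0 := by linarith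
  have hIic_nhds : Iic (0:ℝ) ∈ nhds (-t) := Iic_mem_nhds hx
  have hcontAt : ContinuousAt f (-t) := by
    have : ContinuousWithinAt d (Iic 0) (-t) := hd_cont (-t) (le_of_lt hx)
    exact ((this.continuousAt hIic_nhds).sub continuousAt_const)
  have hFt : HasDerivAt F (f (-t)) (-t) := by
    have hderiv : HasDerivAt (fun x => F (-t) + ∫ u in (-t)..x, f u) (f (-t)) (-t) := by
      refine HasDerivAt.const_add _ ?_
      refine intervalIntegral.integral_hasDerivAt_right ?_ ⟨Iic 0, hIic_nhds, ?_⟩ hcontAt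
      · exact IntervalIntegrable.refl
      · exact hf_meas
    refine hderiv.congr_of_eventuallyEq ?_
    filter_upwards [Iio_mem_nhds hx] with x hxlt
    have hx0 : x ≤ 0 := le_of_lt hxlt
    have h1 : IntegrableOn f (Iic x) := hd_int.mono_set (Iic_subset_Iic.mpr hx0)
    have h2 : IntegrableOn f (Iic (-t)) := hd_int.mono_set (Iic_subset_Iic.mpr (le_of_lt hx))
    have := intervalIntegral.integral_Iic_sub_Iic h2 h1
    simp only [hF]
    linarith [this]
  -- Step 3: compose with negation and transfer
  have hcomp : HasDerivAt (fun s => F (-s)) (-(d (-t) - b)) t := by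
    have := hFt.comp t ((hasDerivAt_id t).neg)
    simp [hf, mul_comm] at this
    rw [neg_sub]
    exact this
  refine hcomp.congr_of_eventuallyEq ?_
  filter_upwards [Ioi_mem_nhds ht] with s hs
  exact key s hs
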